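/- For every integer n ≥ 2 and every constant μ ∈ (0,1), there exist constants A > 0, B ≥ 0, α ∈ [n, ∞) and β ∈ (0,1) such that the function h(θ) = A (sin(θ/μ))^{1/(1+α)} + B (sin(θ/μ))^{1/(1+β)} satisfies 𝓛h(θ) ≤ 0 for all θ ∈ (0, μπ). -/

import Mathlib

open scoped BigOperators
open Real

private lemma sq_le_imp {x y : ℝ} (hx : 0 ≤ x) (hy : 0 ≤ y) (h : x ^ 2 ≤ y ^ 2) : x ≤ y := by
  nlinarith [h, hx, hy]

private lemma sq_lt_imp {x y : ℝ} (hy : 0 ≤ y) (h : x ^ 2 < y ^ 2) : x < y := by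
  nlinarith [h, hy, sq_nonneg (x - y), sq_nonneg (x + y)]

private lemma hasDerivAt_aux (C1 C2 r1 r2 μ : ℝ) (x : ℝ)
    (hx : 0 < Real.sin (x / μ)) :
    HasDerivAt (fun t => C1 * Real.sin (t / μ) ^ r1 + C2 * Real.sin (t / μ) ^ r2)
      ((C1 * r1 * Real.sin (x / μ) ^ (r1 - 1) + C2 * r2 * Real.sin (x / μ) ^ (r2 - 1))
        * (Real.cos (x / μ) / μ)) x := by
  have hdiv : HasDerivAt (fun t : ℝ => t / μ) (1 / μ) x := by
    simpa using (hasDerivAt_id x).div_const μ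
  have hsin : HasDerivAt (fun t : ℝ => Real.sin (t / μ)) (Real.cos (x / μ) * (1 / μ)) x :=
    by have := (Real.hasDerivAt_sin (x / μ)).comp x hdiv; exact this
  have h1 : HasDerivAt (fun t : ℝ => Real.sin (t / μ) ^ r1)
      (Real.cos (x / μ) * (1 / μ) * r1 * Real.sin (x / μ) ^ (r1 - 1)) x :=
    hsin.rpow_const (Or.inl hx.ne')
  have h2 : HasDerivAt (fun t : ℝ => Real.sin (t / μ) ^ r2)
      (Real.cos (x / μ) * (1 / μ) * r2 * Real.sin (x / μ) ^ (r2 - 1)) x :=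
    hsin.rpow_const (Or.inl hx.ne')
  have h3 := (h1.const_mul C1).add (h2.const_mul C2)
  exact h3.congr_deriv (by ring)

private lemma hasDerivAt_cosdiv (μ : ℝ) (x : ℝ) :
    HasDerivAt (fun t : ℝ => Real.cos (t / μ) / μ)
      (-Real.sin (x / μ) * (1 / μ) / μ) x := by
  have hdiv : HasDerivAt (fun t : ℝ => t / μ) (1 / μ) x := by
    simpa using (hasDerivAt_id x).div_const μ
  have hcos : HasDerivAt (fun t : ℝ => Real.cos (t / μ)) (-Real.sin (x / μ) * (1 / μ)) x :=
    by have := (Real.hasDerivAt_cos (x / μ)).comp x hdiv; exact this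
  exact hcos.div_const μ

set_option maxHeartbeats 2000000 in
private lemma core_ineq (N μ p q A B g1 d1 Cb W κ τ θc Θ s c : ℝ)
    (hN : 2 ≤ N)
    (hμ0 : 0 < μ) (hμ1 : μ ≤ 1)
    (hp0 : 0 < p) (hp1 : p ≤ 1) (hq0 : 0 < q) (hq1 : q ≤ 1) (hpq : p < q)
    (hqμ : μ ≤ q) (hqq : d1 ≤ q * (1 - q))
    (hg1 : g1 = p * (1 - p)) (hd1 : 0 < d1)
    (hCb : Cb = 2 * N)
    (hW0 : 0 < W) (hW1 : W ≤ 1) (hWg : (N + 1) * W ≤ g1 / 4)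
    (hκ0 : 0 ≤ κ)
    (hκb2 : κ ^ 2 ≤ g1 * Cb / 8)
    (hκlow : 2 * N * p * q + (3 / 4) * g1 ≤ κ)
    (hNp2 : N * p ^ 2 ≤ g1 / 4)
    (hA1 : 1 ≤ A)
    (hA2 : 8 * N / g1 ≤ A ^ 2) (hA3 : 2 * N / g1 ≤ A ^ 2)
    (hτ : τ = 2 * p / (q - p)) (hθc0 : 0 < θc)
    (hθc2 : θc ^ 2 = g1 / (8 * Cb) * (A / B) ^ 2)
    (hΘdef : Θ = θc ^ τ)
    (hA4 : Cb ≤ 3 * d1 * A ^ 2 * Θ) (hA5 : κ ≤ 9 / 4 * g1 * A ^ 2 * Θ)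
    (hBA : d1 * B * W = 2 * A)
    (hZ3 : N + 2 * N * (A + B) ^ 2 ≤ d1 / 2 * (B * W) ^ 4)
    (hs0 : 0 < s) (hs1 : s ≤ 1) (hc2 : c ^ 2 = 1 - s ^ 2) :
    (A * s ^ p + B * s ^ q) * (1 + (A * s ^ p + B * s ^ q) ^ 2) *
        ((A * s ^ p) * (p * (p - 1) * c ^ 2 + (μ ^ 2 - p) * s ^ 2)
          + (B * s ^ q) * (q * (q - 1) * c ^ 2 + (μ ^ 2 - q) * s ^ 2))
      + N * μ ^ 2 * s ^ 2 * (1 + (A * s ^ p + B * s ^ q) ^ 2)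
      + N * c ^ 2 * (p * (A * s ^ p) + q * (B * s ^ q)) ^ 2 ≤ 0 := by
  have hA0 : (0:ℝ) < A := lt_of_lt_of_le one_pos hA1
  have hB0 : (0:ℝ) < B := by nlinarith only [hBA, hA0, hd1, hW0, mul_pos hd1 hW0]
  have hg10 : 0 < g1 := by rw [hg1]; nlinarith only [hp0, hp1, hpq, hq1]
  have hN0 : (0:ℝ) < N := by linarith only [hN]
  have hCb0 : (0:ℝ) < Cb := by rw [hCb]; linarith only [hN0]
  obtain ⟨P, hP⟩ : ∃ x : ℝ, x = s ^ p := ⟨_, rfl⟩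
  obtain ⟨Q, hQ⟩ : ∃ x : ℝ, x = s ^ q := ⟨_, rfl⟩
  have hP0 : 0 < P := hP ▸ Real.rpow_pos_of_pos hs0 p
  have hQ0 : 0 < Q := hQ ▸ Real.rpow_pos_of_pos hs0 q
  have hP1 : P ≤ 1 := hP ▸ Real.rpow_le_one hs0.le hs1 hp0.le
  have hQ1 : Q ≤ 1 := hQ ▸ Real.rpow_le_one hs0.le hs1 hq0.le
  have hQP : Q ≤ P := by
    rw [hP, hQ]; exact Real.rpow_le_rpow_of_exponent_ge hs0 hs1 hpq.le
  have hsP : s ≤ P := by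
    rw [hP]
    have h := Real.rpow_le_rpow_of_exponent_ge hs0 hs1 hp1
    rwa [Real.rpow_one] at h
  have hsQ : s ≤ Q := by
    rw [hQ]
    have h := Real.rpow_le_rpow_of_exponent_ge hs0 hs1 hq1
    rwa [Real.rpow_one] at h
  obtain ⟨ψp, hψpdef⟩ : ∃ x : ℝ, x = p * (p - 1) * c ^ 2 + (μ ^ 2 - p) * s ^ 2 := ⟨_, rfl⟩
  obtain ⟨ψq, hψqdef⟩ : ∃ x : ℝ, x = q * (q - 1) * c ^ 2 + (μ ^ 2 - q) * s ^ 2 := ⟨_, rfl⟩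
  have hψpe : ψp = -g1 + (μ ^ 2 - p ^ 2) * s ^ 2 := by rw [hψpdef, hc2, hg1]; ring
  have hψqe : ψq = -(q * (1 - q)) + (μ ^ 2 - q ^ 2) * s ^ 2 := by rw [hψqdef, hc2]; ring
  rw [← hP, ← hQ, ← hψpdef, ← hψqdef]
  obtain ⟨a, ha⟩ : ∃ x : ℝ, x = A * P := ⟨_, rfl⟩
  obtain ⟨b, hb⟩ : ∃ x : ℝ, x = B * Q := ⟨_, rfl⟩
  rw [← ha, ← hb]
  have ha0 : 0 < a := ha ▸ mul_pos hA0 hP0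
  have hb0 : 0 < b := hb ▸ mul_pos hB0 hQ0
  have hμq2 : μ ^ 2 - q ^ 2 ≤ 0 := by nlinarith only [hqμ, hμ0, hq0]
  have hs2pos : 0 < s ^ 2 := by positivity
  have hs2le : s ^ 2 ≤ 1 := by nlinarith only [hs0, hs1]
  have hμ2le : μ ^ 2 ≤ 1 := by nlinarith only [hμ0, hμ1]
  have hμ2pos : 0 < μ ^ 2 := by positivity
  have hμq2s : (μ ^ 2 - q ^ 2) * s ^ 2 ≤ 0 := mul_nonpos_of_nonpos_of_nonneg hμq2 hs2pos.le
  have hψqb : ψq ≤ -d1 := by rw [hψqe]; linarith only [hqq, hμq2s]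
  have hc2nn : 0 ≤ c ^ 2 := sq_nonneg c
  have hc2le : c ^ 2 ≤ 1 := by rw [hc2]; linarith only [hs2pos]
  have hident : (a + b) * (1 + (a + b) ^ 2) * (a * ψp + b * ψq)
      + N * μ ^ 2 * s ^ 2 * (1 + (a + b) ^ 2) + N * c ^ 2 * (p * a + q * b) ^ 2
      = a ^ 2 * (ψp + N * p ^ 2 * c ^ 2 + N * μ ^ 2 * s ^ 2)
        + (a * b) * (ψp + ψq + 2 * N * p * q * c ^ 2 + 2 * N * μ ^ 2 * s ^ 2)
        + b ^ 2 * (ψq + N * q ^ 2 * c ^ 2 + N * μ ^ 2 * s ^ 2)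
        + N * μ ^ 2 * s ^ 2
        + (a + b) ^ 3 * (a * ψp + b * ψq) := by ring
  have hAg1 : 8 * N ≤ A ^ 2 * g1 := by
    rw [div_le_iff₀ hg10] at hA2; exact hA2
  have hAg2 : 2 * N ≤ A ^ 2 * g1 := by
    rw [div_le_iff₀ hg10] at hA3; exact hA3
  have hμNs : N * μ ^ 2 * s ^ 2 ≤ N * s ^ 2 := by
    have h := mul_le_mul_of_nonneg_right
      (mul_le_mul_of_nonneg_left hμ2le hN0.le) hs2pos.le
    calc N * μ ^ 2 * s ^ 2 = N * μ ^ 2 * s ^ 2 := rfl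
      _ ≤ N * 1 * s ^ 2 := h
      _ = N * s ^ 2 := by ring
  have hAsa : A ^ 2 * s ^ 2 ≤ a ^ 2 := by
    have h1 : A * s ≤ a := by
      rw [ha]; exact mul_le_mul_of_nonneg_left hsP hA0.le
    nlinarith only [h1, mul_pos hA0 hs0]
  have hNs8 : N * μ ^ 2 * s ^ 2 ≤ g1 / 8 * a ^ 2 := by
    have h3 := mul_le_mul_of_nonneg_right hAg1 hs2pos.le
    nlinarith only [hμNs, h3, hAsa, hg10]
  have hNs2 : N * μ ^ 2 * s ^ 2 ≤ g1 / 2 * a ^ 2 := by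
    have h3 := mul_le_mul_of_nonneg_right hAg2 hs2pos.le
    nlinarith only [hμNs, h3, hAsa, hg10]
  rcases le_or_gt (s ^ 2) W with hz | hz
  · -- s² ≤ W : zones A and B
    have hWa : (N + 1) * s ^ 2 ≤ g1 / 4 := by nlinarith only [hWg, hz, hN0]
    have fμp : (μ ^ 2 - p ^ 2) * s ^ 2 ≤ 1 * s ^ 2 :=
      mul_le_mul_of_nonneg_right (by nlinarith only [hμ2le, sq_nonneg p]) hs2pos.le
    have hψpb : ψp ≤ -(3 / 4) * g1 := by
      rw [hψpe]; linarith only [fμp, hWa, hs2pos, hN0,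
        mul_pos hN0 hs2pos]
    have fpc : N * p ^ 2 * c ^ 2 ≤ N * p ^ 2 :=
      calc N * p ^ 2 * c ^ 2 ≤ N * p ^ 2 * 1 :=
            mul_le_mul_of_nonneg_left hc2le (by positivity)
        _ = N * p ^ 2 := by ring
    have hX1 : ψp + N * p ^ 2 * c ^ 2 + N * μ ^ 2 * s ^ 2 ≤ -(g1 / 2) := by
      rw [hψpe]; linarith only [fμp, fpc, hNp2, hμNs, hWa]
    have hDψ : a * ψp + b * ψq ≤ 0 := by
      have f1 := mul_le_mul_of_nonneg_left hψpb ha0.le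
      have f2 := mul_le_mul_of_nonneg_left hψqb hb0.le
      nlinarith only [f1, f2, mul_pos ha0 hg10, mul_pos hb0 hd1]
    have hX2 : ψp + ψq + 2 * N * p * q * c ^ 2 + 2 * N * μ ^ 2 * s ^ 2 ≤ κ := by
      rw [hψpe, hψqe]
      have h1 : 2 * N * p * q * c ^ 2 ≤ 2 * N * p * q :=
        calc 2 * N * p * q * c ^ 2 ≤ 2 * N * p * q * 1 :=
              mul_le_mul_of_nonneg_left hc2le (by positivity)
          _ = 2 * N * p * q := by ring
      have h4 : (2 * N + 1) * s ^ 2 ≤ g1 / 2 := by nlinarith only [hWa, hs2pos, hN0]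
      have h5 : 0 < q * (1 - q) := lt_of_lt_of_le hd1 hqq
      linarith only [h1, hμq2s, fμp, h4, hκlow, h5, hμNs, hg10]
    have hX3 : ψq + N * q ^ 2 * c ^ 2 + N * μ ^ 2 * s ^ 2 ≤ Cb := by
      rw [hCb, hψqe]
      have h5 : N * q ^ 2 * c ^ 2 ≤ N :=
        calc N * q ^ 2 * c ^ 2 ≤ N * 1 * 1 := by
              apply mul_le_mul (mul_le_mul_of_nonneg_left (by nlinarith only [hq0, hq1]) hN0.le)
                hc2le hc2nn (by positivity)
          _ = N := by ring
      have h6 : N * μ ^ 2 * s ^ 2 ≤ N := by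
        calc N * μ ^ 2 * s ^ 2 ≤ N * s ^ 2 := hμNs
          _ ≤ N * 1 := mul_le_mul_of_nonneg_left hs2le hN0.le
          _ = N := by ring
      have h7 : 0 < q * (1 - q) := lt_of_lt_of_le hd1 hqq
      linarith only [h5, h6, h7, hμq2s]
    have hX10 : a ^ 2 * (ψp + N * p ^ 2 * c ^ 2 + N * μ ^ 2 * s ^ 2) ≤ a ^ 2 * (-(g1 / 2)) :=
      mul_le_mul_of_nonneg_left hX1 (sq_nonneg a)
    have hX20 : (a * b) * (ψp + ψq + 2 * N * p * q * c ^ 2 + 2 * N * μ ^ 2 * s ^ 2)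
        ≤ (a * b) * κ := mul_le_mul_of_nonneg_left hX2 (mul_pos ha0 hb0).le
    have hX30 : b ^ 2 * (ψq + N * q ^ 2 * c ^ 2 + N * μ ^ 2 * s ^ 2) ≤ b ^ 2 * Cb :=
      mul_le_mul_of_nonneg_left hX3 (sq_nonneg b)
    rcases le_or_gt (Cb * b ^ 2) (g1 / 8 * a ^ 2) with hzA | hzB
    · -- Zone A
      have hH3 : (a + b) ^ 3 * (a * ψp + b * ψq) ≤ 0 :=
        mul_nonpos_of_nonneg_of_nonpos (by positivity) hDψ
      have hκb : κ * b ≤ g1 / 8 * a := by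
        apply sq_le_imp (by positivity) (by positivity)
        have h1 : κ ^ 2 * b ^ 2 ≤ (g1 * Cb / 8) * b ^ 2 :=
          mul_le_mul_of_nonneg_right hκb2 (sq_nonneg b)
        have h2 : (g1 / 8) * (Cb * b ^ 2) ≤ (g1 / 8) * (g1 / 8 * a ^ 2) :=
          mul_le_mul_of_nonneg_left hzA (by positivity)
        nlinarith only [h1, h2]
      have hκab : (a * b) * κ ≤ g1 / 8 * a ^ 2 := by
        nlinarith only [mul_le_mul_of_nonneg_right hκb ha0.le]
      have hCbb : b ^ 2 * Cb ≤ g1 / 8 * a ^ 2 := by linarith only [hzA]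
      rw [hident]
      have hfin : 0 ≤ g1 / 8 * a ^ 2 := by positivity
      linarith only [hX10, hX20, hX30, hκab, hCbb, hNs8, hH3, hfin]
    · -- Zone B
      have hPΘ : Θ ≤ P ^ 2 := by
        have hqp0 : 0 < q - p := by linarith only [hpq]
        have key : g1 / 8 * (A * P) ^ 2 < Cb * (B * Q) ^ 2 := by
          rw [← ha, ← hb]; exact hzB
        have hθlt : θc < Q / P := by
          apply sq_lt_imp (by positivity)
          rw [hθc2, div_pow, div_pow, div_mul_div_comm,
            div_lt_div_iff₀ (by positivity) (by positivity)]
          nlinarith only [key, hCb0, hg10, sq_nonneg (A * P), sq_nonneg (B * Q)]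
        have hQPe : Q / P = s ^ (q - p) := by rw [hP, hQ, ← Real.rpow_sub hs0]
        have hτ0 : 0 ≤ τ := by rw [hτ]; positivity
        have h1 : θc ^ τ ≤ (s ^ (q - p)) ^ τ := by
          apply Real.rpow_le_rpow hθc0.le _ hτ0
          rw [← hQPe]; exact hθlt.le
        have h2 : (s ^ (q - p)) ^ τ = P ^ 2 := by
          rw [hP, ← Real.rpow_natCast (s ^ p) 2, ← Real.rpow_mul hs0.le,
            ← Real.rpow_mul hs0.le]
          congr 1
          rw [hτ]
          field_simp
          ring
        rw [hΘdef, ← h2]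
        exact h1
      have ha2Θ : A ^ 2 * Θ ≤ a ^ 2 := by
        rw [ha, mul_pow]
        exact mul_le_mul_of_nonneg_left hPΘ (sq_nonneg A)
      have hκa : κ ≤ 9 / 4 * g1 * a ^ 2 := by nlinarith only [hA5, ha2Θ, hg10]
      have hCba : Cb ≤ 3 * d1 * a ^ 2 := by nlinarith only [hA4, ha2Θ, hd1]
      have hψpq3 : a * ψp + b * ψq ≤ a * (-(3 / 4) * g1) + b * (-d1) := by
        have f1 := mul_le_mul_of_nonneg_left hψpb ha0.le
        have f2 := mul_le_mul_of_nonneg_left hψqb hb0.le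
        linarith only [f1, f2]
      have h3ab : 3 * a ^ 2 * b ≤ (a + b) ^ 3 := by
        nlinarith only [pow_pos ha0 3, mul_pos ha0 (mul_pos hb0 hb0), pow_pos hb0 3]
      have hH3b : (a + b) ^ 3 * (a * ψp + b * ψq) ≤ 3 * a ^ 2 * b * (a * ψp + b * ψq) :=
        mul_le_mul_of_nonpos_right h3ab hDψ
      have hH3c : 3 * a ^ 2 * b * (a * ψp + b * ψq)
          ≤ -(9 / 4 * g1 * (a ^ 3 * b)) - 3 * d1 * (a ^ 2 * b ^ 2) := by
        have h1 : 3 * a ^ 2 * b * (a * ψp + b * ψq)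
            ≤ 3 * a ^ 2 * b * (a * (-(3 / 4) * g1) + b * (-d1)) :=
          mul_le_mul_of_nonneg_left hψpq3 (by positivity)
        nlinarith only [h1]
      have hκab : (a * b) * κ ≤ 9 / 4 * g1 * (a ^ 3 * b) := by
        have h1 : (a * b) * κ ≤ (a * b) * (9 / 4 * g1 * a ^ 2) :=
          mul_le_mul_of_nonneg_left hκa (mul_pos ha0 hb0).le
        nlinarith only [h1]
      have hCbb : b ^ 2 * Cb ≤ 3 * d1 * (a ^ 2 * b ^ 2) := by
        have h1 : b ^ 2 * Cb ≤ b ^ 2 * (3 * d1 * a ^ 2) :=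
          mul_le_mul_of_nonneg_left hCba (sq_nonneg b)
        nlinarith only [h1]
      rw [hident]
      have hX100 : a ^ 2 * (ψp + N * p ^ 2 * c ^ 2 + N * μ ^ 2 * s ^ 2) ≤ -(g1 / 2) * a ^ 2 := by
        nlinarith only [hX10]
      linarith only [hX100, hX20, hX30, hκab, hCbb, hNs2, hH3b, hH3c]
  · -- Zone C : W < s²
    have hsW : W ≤ s := by nlinarith only [hz, hs0, hs1]
    have hQW : W ≤ Q := le_trans hsW hsQ
    have hab2 : 2 * a ≤ d1 * b := by
      have h1 : a ≤ A := by
        rw [ha]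
        calc A * P ≤ A * 1 := mul_le_mul_of_nonneg_left hP1 hA0.le
          _ = A := by ring
      have h2 : d1 * (B * W) ≤ d1 * b := by
        rw [hb]
        have h3 : B * W ≤ B * Q := mul_le_mul_of_nonneg_left hQW hB0.le
        exact mul_le_mul_of_nonneg_left h3 hd1.le
      nlinarith only [h1, h2, hBA]
    have hψpb2 : ψp ≤ s ^ 2 := by
      rw [hψpe]
      have f1 : (μ ^ 2 - p ^ 2) * s ^ 2 ≤ 1 * s ^ 2 :=
        mul_le_mul_of_nonneg_right (by nlinarith only [hμ2le, sq_nonneg p]) hs2pos.le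
      linarith only [f1, hg10]
    have hDψ : a * ψp + b * ψq ≤ -(d1 / 2) * b := by
      have h1 : a * ψp ≤ a * s ^ 2 := mul_le_mul_of_nonneg_left hψpb2 ha0.le
      have h2 : b * ψq ≤ b * (-d1) := mul_le_mul_of_nonneg_left hψqb hb0.le
      have h3 : a * s ^ 2 ≤ a * 1 := mul_le_mul_of_nonneg_left hs2le ha0.le
      nlinarith only [h1, h2, h3, hab2]
    have hDψ0 : a * ψp + b * ψq ≤ 0 := by
      nlinarith only [hDψ, mul_pos hd1 hb0]
    have hHcube : b ^ 3 ≤ (a + b) * (1 + (a + b) ^ 2) := by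
      nlinarith only [ha0, hb0, mul_pos ha0 hb0, mul_pos (mul_pos ha0 hb0) hb0,
        mul_pos (mul_pos ha0 ha0) hb0, pow_pos ha0 3]
    have hmain : (a + b) * (1 + (a + b) ^ 2) * (a * ψp + b * ψq) ≤ b ^ 3 * (-(d1 / 2) * b) :=
      calc (a + b) * (1 + (a + b) ^ 2) * (a * ψp + b * ψq)
          ≤ b ^ 3 * (a * ψp + b * ψq) := mul_le_mul_of_nonpos_right hHcube hDψ0
        _ ≤ b ^ 3 * (-(d1 / 2) * b) := mul_le_mul_of_nonneg_left hDψ (by positivity)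
    have hb4 : (B * W) ^ 4 ≤ b ^ 4 := by
      have h1 : B * W ≤ b := by
        rw [hb]; exact mul_le_mul_of_nonneg_left hQW hB0.le
      have h0 : 0 < B * W := mul_pos hB0 hW0
      exact pow_le_pow_left₀ h0.le h1 4
    have habAB : a + b ≤ A + B := by
      have h1 : a ≤ A := by
        rw [ha]
        calc A * P ≤ A * 1 := mul_le_mul_of_nonneg_left hP1 hA0.le
          _ = A := by ring
      have h2 : b ≤ B := by
        rw [hb]
        calc B * Q ≤ B * 1 := mul_le_mul_of_nonneg_left hQ1 hB0.le
          _ = B := by ring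
      linarith only [h1, h2]
    have hpos1 : N * μ ^ 2 * s ^ 2 * (1 + (a + b) ^ 2) ≤ N * (1 + (A + B) ^ 2) := by
      have h1 : (a + b) ^ 2 ≤ (A + B) ^ 2 := by
        nlinarith only [habAB, ha0, hb0]
      have h2 : μ ^ 2 * s ^ 2 ≤ 1 := by nlinarith only [hμ2le, hs2le, hμ2pos, hs2pos]
      have h3 : N * μ ^ 2 * s ^ 2 ≤ N := by
        nlinarith only [h2, hN0, hμ2pos, hs2pos]
      have h4 : 0 < N * μ ^ 2 * s ^ 2 := by positivity
      nlinarith only [h1, h3, h4, hN0, sq_nonneg (a + b)]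
    have hpos2 : N * c ^ 2 * (p * a + q * b) ^ 2 ≤ N * (A + B) ^ 2 := by
      have h1 : p * a + q * b ≤ A + B := by
        have f1 : p * a ≤ a := by nlinarith only [hp0, hp1, ha0]
        have f2 : q * b ≤ b := by nlinarith only [hq0, hq1, hb0]
        linarith only [f1, f2, habAB]
      have h0 : 0 ≤ p * a + q * b := by positivity
      have h2 : (p * a + q * b) ^ 2 ≤ (A + B) ^ 2 := by nlinarith only [h1, h0]
      calc N * c ^ 2 * (p * a + q * b) ^ 2 ≤ N * 1 * (A + B) ^ 2 := by
            apply mul_le_mul _ h2 (sq_nonneg _) (by positivity)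
            exact mul_le_mul_of_nonneg_left hc2le hN0.le
        _ = N * (A + B) ^ 2 := by ring
    have hfin : b ^ 3 * (-(d1 / 2) * b) ≤ -(d1 / 2) * (B * W) ^ 4 := by
      nlinarith only [hb4, hd1]
    nlinarith only [hmain, hfin, hpos1, hpos2, hZ3]

set_option maxHeartbeats 4000000 in
/-- Lemma 2.1. For every `n ≥ 2` and `μ ∈ (0,1)` there are constants
`A > 0`, `B ≥ 0`, `α ∈ [n, ∞)`, `β ∈ (0,1)` such that
`h(θ) = A (sin(θ/μ))^{1/(1+α)} + B (sin(θ/μ))^{1/(1+β)}` satisfies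
`𝓛h = h(1+h²)(h''+h) + n(1+h²+(h')²) ≤ 0` on `(0, μπ)`. -/
theorem stmt2 (n : ℕ) (hn : 2 ≤ n) (μ : ℝ) (hμ : μ ∈ Set.Ioo (0:ℝ) 1) :
    ∃ A B α β : ℝ, 0 < A ∧ 0 ≤ B ∧ (n : ℝ) ≤ α ∧ β ∈ Set.Ioo (0:ℝ) 1 ∧
      ∀ h : ℝ → ℝ,
        (h = fun θ => A * Real.sin (θ / μ) ^ (1 / (1 + α))
            + B * Real.sin (θ / μ) ^ (1 / (1 + β))) →
        ∀ θ ∈ Set.Ioo 0 (μ * Real.pi),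
          h θ * (1 + h θ ^ 2) * (deriv (deriv h) θ + h θ)
            + (n : ℝ) * (1 + h θ ^ 2 + (deriv h θ) ^ 2) ≤ 0 := by
  obtain ⟨hμ0, hμ1⟩ := hμ
  obtain ⟨N, hNdef⟩ : ∃ x : ℝ, x = (n : ℝ) := ⟨_, rfl⟩
  have hN : (2:ℝ) ≤ N := by rw [hNdef]; exact_mod_cast hn
  have hN0 : (0:ℝ) < N := by linarith only [hN]
  have hμ2pos : 0 < μ ^ 2 := by positivity
  have hμ2lt : μ ^ 2 < 1 := by nlinarith only [hμ0, hμ1]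
  obtain ⟨p, hpdef⟩ : ∃ x : ℝ, x = 1 / (40 * N) := ⟨_, rfl⟩
  obtain ⟨q, hqdef⟩ : ∃ x : ℝ, x = (1 + μ ^ 2) / 2 := ⟨_, rfl⟩
  obtain ⟨g1, hg1def⟩ : ∃ x : ℝ, x = p * (1 - p) := ⟨_, rfl⟩
  obtain ⟨d1, hd1def⟩ : ∃ x : ℝ, x = (1 - μ ^ 2) / 4 := ⟨_, rfl⟩
  obtain ⟨Cb, hCbdef⟩ : ∃ x : ℝ, x = 2 * N := ⟨_, rfl⟩
  have hp0 : 0 < p := by rw [hpdef]; positivity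
  have hNp : N * p = 1 / 40 := by rw [hpdef]; field_simp
  have hp80 : p ≤ 1 / 80 := by
    rw [hpdef, div_le_div_iff₀ (by positivity) (by norm_num)]
    linarith only [hN]
  have hp1 : p ≤ 1 := by linarith only [hp80]
  have hq0 : 0 < q := by rw [hqdef]; positivity
  have hq12 : 1 / 2 < q := by rw [hqdef]; linarith only [hμ2pos]
  have hq1 : q < 1 := by rw [hqdef]; linarith only [hμ2lt]
  have hpq : p < q := by linarith only [hp80, hq12]
  have hqμ : μ ≤ q := by rw [hqdef]; nlinarith only [sq_nonneg (1 - μ)]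
  have hg10 : 0 < g1 := by
    rw [hg1def]; nlinarith only [hp0, hp80]
  have hd10 : 0 < d1 := by rw [hd1def]; linarith only [hμ2lt]
  have hqq : d1 ≤ q * (1 - q) := by
    rw [hd1def, hqdef]; nlinarith only [hμ2pos, hμ2lt]
  obtain ⟨W, hWdef⟩ : ∃ x : ℝ, x = min (g1 / (4 * (N + 1))) 1 := ⟨_, rfl⟩
  have hW0 : 0 < W := by
    rw [hWdef]; exact lt_min (by positivity) one_pos
  have hW1 : W ≤ 1 := by rw [hWdef]; exact min_le_right _ _
  have hWg : (N + 1) * W ≤ g1 / 4 := by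
    have h1 : W ≤ g1 / (4 * (N + 1)) := by rw [hWdef]; exact min_le_left _ _
    have h2 : (N + 1) * W ≤ (N + 1) * (g1 / (4 * (N + 1))) :=
      mul_le_mul_of_nonneg_left h1 (by linarith only [hN0])
    have h3 : (N + 1) * (g1 / (4 * (N + 1))) = g1 / 4 := by
      field_simp
    linarith only [h2, h3]
  obtain ⟨κ, hκdef⟩ : ∃ x : ℝ, x = 2 * N * p * q + (3 / 4) * g1 := ⟨_, rfl⟩
  have hκ0 : 0 ≤ κ := by
    rw [hκdef]; nlinarith only [hN0, hp0, hq0, hg10, mul_pos (mul_pos hN0 hp0) hq0]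
  have hκlow : 2 * N * p * q + (3 / 4) * g1 ≤ κ := le_of_eq hκdef.symm
  have hg1p : g1 ≤ p := by rw [hg1def]; nlinarith only [hp0, sq_nonneg p]
  have hκle : κ ≤ 19 / 320 := by
    rw [hκdef]
    have h1 : 2 * N * p * q ≤ 1 / 20 := by
      have h2 : 2 * N * p * q = 2 * (N * p) * q := by ring
      rw [h2, hNp]
      linarith only [hq1, hq0]
    linarith only [h1, hg1p, hp80]
  have hκb2 : κ ^ 2 ≤ g1 * Cb / 8 := by
    have h1 : κ ^ 2 ≤ (19 / 320) ^ 2 := by nlinarith only [hκle, hκ0]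
    have h2 : g1 * Cb / 8 = (1 - p) / 160 := by
      rw [hCbdef, hg1def]
      have h3 : p * (1 - p) * (2 * N) / 8 = 2 * (N * p) * (1 - p) / 8 := by ring
      rw [h3, hNp]; ring
    rw [h2]; linarith only [h1, hp80]
  have hNp2 : N * p ^ 2 ≤ g1 / 4 := by
    rw [hg1def]
    have h1 : N * p ^ 2 = (N * p) * p := by ring
    rw [h1, hNp]
    have hpp : 0 ≤ p * (1 / 80 - p) := mul_nonneg hp0.le (by linarith only [hp80])
    nlinarith only [hpp, hp0]
  obtain ⟨τ, hτdef⟩ : ∃ x : ℝ, x = 2 * p / (q - p) := ⟨_, rfl⟩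
  obtain ⟨θc, hθcdef⟩ : ∃ x : ℝ, x = Real.sqrt (g1 / (8 * Cb)) * (d1 * W / 2) := ⟨_, rfl⟩
  have hCb0 : (0:ℝ) < Cb := by rw [hCbdef]; linarith only [hN0]
  have hθc0 : 0 < θc := by
    rw [hθcdef]
    exact mul_pos (Real.sqrt_pos.mpr (by positivity)) (by positivity)
  obtain ⟨Θ, hΘdef⟩ : ∃ x : ℝ, x = θc ^ τ := ⟨_, rfl⟩
  have hΘ0 : 0 < Θ := by rw [hΘdef]; exact Real.rpow_pos_of_pos hθc0 τ
  obtain ⟨S, hSdef⟩ : ∃ x : ℝ, x = 8 * N / g1 + 2 * N / g1 + Cb / (3 * d1 * Θ)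
      + κ / (9 / 4 * g1 * Θ) + d1 ^ 3 / 8 * (N + 2 * N * (1 + 2 / (d1 * W)) ^ 2) := ⟨_, rfl⟩
  have hS0 : 0 ≤ S := by rw [hSdef]; positivity
  obtain ⟨A, hAdef⟩ : ∃ x : ℝ, x = 1 + Real.sqrt S := ⟨_, rfl⟩
  have hA1 : 1 ≤ A := by rw [hAdef]; linarith only [Real.sqrt_nonneg S]
  have hA0 : 0 < A := by linarith only [hA1]
  have hSA : S ≤ A ^ 2 := by
    rw [hAdef]
    nlinarith only [Real.sq_sqrt hS0, Real.sqrt_nonneg S]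
  obtain ⟨B, hBdef⟩ : ∃ x : ℝ, x = 2 * A / (d1 * W) := ⟨_, rfl⟩
  have hB0 : 0 < B := by rw [hBdef]; positivity
  have hBA : d1 * B * W = 2 * A := by
    rw [hBdef]
    field_simp
  -- pieces of S
  have ht1 : (0:ℝ) ≤ 8 * N / g1 := by positivity
  have ht2 : (0:ℝ) ≤ 2 * N / g1 := by positivity
  have ht3 : (0:ℝ) ≤ Cb / (3 * d1 * Θ) := by positivity
  have ht4 : (0:ℝ) ≤ κ / (9 / 4 * g1 * Θ) := by positivity
  have ht5 : (0:ℝ) ≤ d1 ^ 3 / 8 * (N + 2 * N * (1 + 2 / (d1 * W)) ^ 2) := by positivity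
  have hSA' : 8 * N / g1 + 2 * N / g1 + Cb / (3 * d1 * Θ)
      + κ / (9 / 4 * g1 * Θ) + d1 ^ 3 / 8 * (N + 2 * N * (1 + 2 / (d1 * W)) ^ 2) ≤ A ^ 2 := by
    rw [← hSdef]; exact hSA
  have hA2 : 8 * N / g1 ≤ A ^ 2 := by linarith only [hSA', ht2, ht3, ht4, ht5]
  have hA3 : 2 * N / g1 ≤ A ^ 2 := by linarith only [hSA', ht1, ht3, ht4, ht5]
  have hA4 : Cb ≤ 3 * d1 * A ^ 2 * Θ := by
    have h1 : Cb / (3 * d1 * Θ) ≤ A ^ 2 := by linarith only [hSA', ht1, ht2, ht4, ht5]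
    rw [div_le_iff₀ (by positivity)] at h1
    nlinarith only [h1]
  have hA5 : κ ≤ 9 / 4 * g1 * A ^ 2 * Θ := by
    have h1 : κ / (9 / 4 * g1 * Θ) ≤ A ^ 2 := by linarith only [hSA', ht1, ht2, ht3, ht5]
    rw [div_le_iff₀ (by positivity)] at h1
    nlinarith only [h1]
  have hθc2 : θc ^ 2 = g1 / (8 * Cb) * (A / B) ^ 2 := by
    have h1 : A / B = d1 * W / 2 := by
      rw [hBdef]
      field_simp
    rw [h1, hθcdef, mul_pow, Real.sq_sqrt (by positivity : (0:ℝ) ≤ g1 / (8 * Cb))]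
  have hZ3 : N + 2 * N * (A + B) ^ 2 ≤ d1 / 2 * (B * W) ^ 4 := by
    have hBW : B * W = 2 * A / d1 := by
      rw [hBdef]
      field_simp
    have e1 : d1 / 2 * (B * W) ^ 4 = 8 * A ^ 4 / d1 ^ 3 := by
      rw [hBW]
      field_simp
      ring
    have e2 : A + B = A * (1 + 2 / (d1 * W)) := by
      rw [hBdef]
      field_simp
    have h1 : d1 ^ 3 / 8 * (N + 2 * N * (1 + 2 / (d1 * W)) ^ 2) ≤ A ^ 2 := by
      linarith only [hSA', ht1, ht2, ht3, ht4]
    have hX0 : 0 ≤ N + 2 * N * (1 + 2 / (d1 * W)) ^ 2 := by positivity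
    have h2 : N + 2 * N * (1 + 2 / (d1 * W)) ^ 2 ≤ 8 * A ^ 2 / d1 ^ 3 := by
      rw [le_div_iff₀ (by positivity)]
      nlinarith only [h1, hd10]
    have h3 : (N + 2 * N * (1 + 2 / (d1 * W)) ^ 2) * A ^ 2 ≤ 8 * A ^ 2 / d1 ^ 3 * A ^ 2 :=
      mul_le_mul_of_nonneg_right h2 (sq_nonneg A)
    have h4 : 8 * A ^ 2 / d1 ^ 3 * A ^ 2 = 8 * A ^ 4 / d1 ^ 3 := by
      field_simp
    have hA21 : 1 ≤ A ^ 2 := by nlinarith only [hA1]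
    have h5 : N ≤ N * A ^ 2 := by nlinarith only [hA21, hN0]
    rw [e1, e2]
    nlinarith only [h3, h4, h5, hX0, sq_nonneg A]
  -- provide the witnesses
  refine ⟨A, B, 40 * N - 1, (1 - μ ^ 2) / (1 + μ ^ 2), hA0, hB0.le, ?_, ?_, ?_⟩
  · rw [← hNdef]; linarith only [hN]
  · constructor
    · exact div_pos (by linarith only [hμ2lt]) (by positivity)
    · rw [div_lt_one (by positivity)]
      linarith only [hμ2pos]
  intro h hh θ hθ
  obtain ⟨hθ0, hθ1⟩ := hθ
  -- exponents
  have hexp1 : 1 / (1 + (40 * N - 1)) = p := by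
    rw [hpdef]
    norm_num
  have hexp2 : 1 / (1 + (1 - μ ^ 2) / (1 + μ ^ 2)) = q := by
    have hden : 1 + (1 - μ ^ 2) / (1 + μ ^ 2) = 2 / (1 + μ ^ 2) := by
      field_simp
      norm_num
    rw [hden, one_div_div, hqdef]
  have hfun : h = fun t => A * Real.sin (t / μ) ^ p + B * Real.sin (t / μ) ^ q := by
    rw [hh]
    funext t
    rw [hexp1, hexp2]
  have hsin_pos : ∀ x ∈ Set.Ioo (0:ℝ) (μ * π), 0 < Real.sin (x / μ) := by
    intro x hx
    apply Real.sin_pos_of_pos_of_lt_pi (div_pos hx.1 hμ0)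
    rw [div_lt_iff₀ hμ0]
    have := hx.2
    linarith only [this]
  have hθmem : θ ∈ Set.Ioo (0:ℝ) (μ * π) := ⟨hθ0, hθ1⟩
  have hsθ : 0 < Real.sin (θ / μ) := hsin_pos θ hθmem
  have hDF : ∀ x ∈ Set.Ioo (0:ℝ) (μ * π),
      HasDerivAt (fun t => A * Real.sin (t / μ) ^ p + B * Real.sin (t / μ) ^ q)
        ((A * p * Real.sin (x / μ) ^ (p - 1) + B * q * Real.sin (x / μ) ^ (q - 1))
          * (Real.cos (x / μ) / μ)) x := by
    intro x hx
    have h1 := hasDerivAt_aux A B p q μ x (hsin_pos x hx)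
    convert h1 using 2
  have hder1 : deriv h θ = (A * p * Real.sin (θ / μ) ^ (p - 1)
      + B * q * Real.sin (θ / μ) ^ (q - 1)) * (Real.cos (θ / μ) / μ) := by
    rw [hfun]
    exact (hDF θ hθmem).deriv
  have hu : HasDerivAt (fun t => A * p * Real.sin (t / μ) ^ (p - 1)
        + B * q * Real.sin (t / μ) ^ (q - 1))
      ((A * p * (p - 1) * Real.sin (θ / μ) ^ (p - 1 - 1)
        + B * q * (q - 1) * Real.sin (θ / μ) ^ (q - 1 - 1)) * (Real.cos (θ / μ) / μ)) θ := by
    have h1 := hasDerivAt_aux (A * p) (B * q) (p - 1) (q - 1) μ θ hsθ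
    convert h1 using 2 <;> ring
  have hGder : HasDerivAt (fun t => (A * p * Real.sin (t / μ) ^ (p - 1)
        + B * q * Real.sin (t / μ) ^ (q - 1)) * (Real.cos (t / μ) / μ))
      ((A * p * (p - 1) * Real.sin (θ / μ) ^ (p - 1 - 1)
        + B * q * (q - 1) * Real.sin (θ / μ) ^ (q - 1 - 1)) * (Real.cos (θ / μ) / μ)
          * (Real.cos (θ / μ) / μ)
        + (A * p * Real.sin (θ / μ) ^ (p - 1) + B * q * Real.sin (θ / μ) ^ (q - 1))
          * (-Real.sin (θ / μ) * (1 / μ) / μ)) θ := hu.mul (hasDerivAt_cosdiv μ θ)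
  have hder2 : deriv (deriv h) θ
      = (A * p * (p - 1) * Real.sin (θ / μ) ^ (p - 1 - 1)
        + B * q * (q - 1) * Real.sin (θ / μ) ^ (q - 1 - 1)) * (Real.cos (θ / μ) / μ)
          * (Real.cos (θ / μ) / μ)
        + (A * p * Real.sin (θ / μ) ^ (p - 1) + B * q * Real.sin (θ / μ) ^ (q - 1))
          * (-Real.sin (θ / μ) * (1 / μ) / μ) := by
    rw [hfun]
    have hevent : deriv (fun t => A * Real.sin (t / μ) ^ p + B * Real.sin (t / μ) ^ q)
        =ᶠ[nhds θ] (fun t => (A * p * Real.sin (t / μ) ^ (p - 1)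
          + B * q * Real.sin (t / μ) ^ (q - 1)) * (Real.cos (t / μ) / μ)) :=
      Filter.eventuallyEq_of_mem (isOpen_Ioo.mem_nhds hθmem) (fun x hx => (hDF x hx).deriv)
    rw [hevent.deriv_eq]
    exact hGder.deriv
  have hval : h θ = A * Real.sin (θ / μ) ^ p + B * Real.sin (θ / μ) ^ q := by rw [hfun]
  rw [hval, hder1, hder2, ← hNdef]
  obtain ⟨s, hsdef⟩ : ∃ x : ℝ, x = Real.sin (θ / μ) := ⟨_, rfl⟩
  obtain ⟨c, hcdef⟩ : ∃ x : ℝ, x = Real.cos (θ / μ) := ⟨_, rfl⟩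
  rw [← hsdef, ← hcdef]
  have hs0 : 0 < s := hsdef ▸ hsθ
  have hs1 : s ≤ 1 := hsdef ▸ Real.sin_le_one _
  have hc2 : c ^ 2 = 1 - s ^ 2 := by rw [hcdef, hsdef]; exact Real.cos_sq' _
  have e1 : s ^ (p - 1) = s ^ p / s := by rw [Real.rpow_sub hs0, Real.rpow_one]
  have e2 : s ^ (p - 1 - 1) = s ^ p / s / s := by
    rw [Real.rpow_sub hs0, Real.rpow_sub hs0, Real.rpow_one]
  have e3 : s ^ (q - 1) = s ^ q / s := by rw [Real.rpow_sub hs0, Real.rpow_one]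
  have e4 : s ^ (q - 1 - 1) = s ^ q / s / s := by
    rw [Real.rpow_sub hs0, Real.rpow_sub hs0, Real.rpow_one]
  rw [e1, e2, e3, e4]
  have key := core_ineq N μ p q A B g1 d1 Cb W κ τ θc Θ s c hN hμ0 hμ1.le hp0 hp1 hq0 hq1.le
    hpq hqμ hqq hg1def hd10 hCbdef hW0 hW1 hWg hκ0 hκb2 hκlow hNp2 hA1 hA2 hA3 hτdef hθc0
    hθc2 hΘdef hA4 hA5 hBA hZ3 hs0 hs1 hc2
  have hμs2 : (0:ℝ) < μ ^ 2 * s ^ 2 := by positivity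
  have heq : (A * s ^ p + B * s ^ q) * (1 + (A * s ^ p + B * s ^ q) ^ 2) *
        ((A * p * (p - 1) * (s ^ p / s / s) + B * q * (q - 1) * (s ^ q / s / s)) * (c / μ)
            * (c / μ)
          + (A * p * (s ^ p / s) + B * q * (s ^ q / s)) * (-s * (1 / μ) / μ)
          + (A * s ^ p + B * s ^ q))
      + N * (1 + (A * s ^ p + B * s ^ q) ^ 2
          + ((A * p * (s ^ p / s) + B * q * (s ^ q / s)) * (c / μ)) ^ 2)
      = ((A * s ^ p + B * s ^ q) * (1 + (A * s ^ p + B * s ^ q) ^ 2) *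
          ((A * s ^ p) * (p * (p - 1) * c ^ 2 + (μ ^ 2 - p) * s ^ 2)
            + (B * s ^ q) * (q * (q - 1) * c ^ 2 + (μ ^ 2 - q) * s ^ 2))
        + N * μ ^ 2 * s ^ 2 * (1 + (A * s ^ p + B * s ^ q) ^ 2)
        + N * c ^ 2 * (p * (A * s ^ p) + q * (B * s ^ q)) ^ 2) / (μ ^ 2 * s ^ 2) := by
    field_simp
    ring
  rw [heq]
  exact div_nonpos_of_nonpos_of_nonneg key hμs2.le
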